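/- Let B ∈ ℝ^{n×n} and let EST^m be the generalized stochastic diagonal estimator built from m i.i.d. standard Gaussian query vectors. Then for every index i, E[((EST^m − diag(B))_i)²] = (1/m)·(B_{ii}² + ‖[B]_{i,:}‖₂²). -/

import Mathlib

open MeasureTheory ProbabilityTheory
open Real Set


noncomputable section

lemma gauss_wd : (gaussianReal 0 1 : Measure ℝ)
    = volume.withDensity (fun x => ((gaussianPDFReal 0 1 x).toNNReal : ENNReal)) := by
  rw [gaussianReal_of_var_ne_zero 0 one_ne_zero, gaussianPDF_def]
  rfl

lemma gauss_pdf_eq (x : ℝ) : gaussianPDFReal 0 1 x = (√(2 * π))⁻¹ * rexp (-(1/2) * x ^ 2) := by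
  simp only [gaussianPDFReal, NNReal.coe_one, mul_one, sub_zero]
  congr 1
  ring_nf

lemma integral_gauss_eq (f : ℝ → ℝ) :
    ∫ x, f x ∂(gaussianReal 0 1) = ∫ x, gaussianPDFReal 0 1 x * f x := by
  rw [gauss_wd, integral_withDensity_eq_integral_smul
    ((measurable_gaussianPDFReal 0 1).real_toNNReal)]
  congr 1 with x
  simp [NNReal.smul_def, Real.coe_toNNReal _ (gaussianPDFReal_nonneg 0 1 x)]

lemma integrable_pow_exp (k : ℕ) :
    Integrable (fun x : ℝ => x ^ k * rexp (-(1/2) * x ^ 2)) := by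
  have := integrable_rpow_mul_exp_neg_mul_sq (b := 1/2) (by norm_num) (s := (k : ℝ))
    (lt_of_lt_of_le neg_one_lt_zero (Nat.cast_nonneg k))
  simpa [Real.rpow_natCast] using this

lemma integrable_pow_gauss (k : ℕ) :
    Integrable (fun x : ℝ => x ^ k) (gaussianReal 0 1) := by
  rw [gauss_wd, integrable_withDensity_iff ((measurable_gaussianPDFReal 0 1).real_toNNReal.coe_nnreal_ennreal) (by simp)]
  simp only [ENNReal.coe_toReal, Real.coe_toNNReal _ (gaussianPDFReal_nonneg 0 1 _)]
  have : Integrable (fun x : ℝ => (√(2 * π))⁻¹ * (x ^ k * rexp (-(1/2) * x ^ 2))) :=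
    (integrable_pow_exp k).const_mul _
  refine this.congr (Filter.Eventually.of_forall fun x => ?_)
  simp only [gauss_pdf_eq]; ring

lemma J_Ioi (k : ℕ) : ∫ x in Ioi (0:ℝ), x ^ k * rexp (-(1/2) * x ^ 2)
    = (1/2 : ℝ) ^ (-((k : ℝ) + 1) / 2) * (1 / 2) * Gamma (((k : ℝ) + 1) / 2) := by
  have := integral_rpow_mul_exp_neg_mul_rpow (p := 2) (q := (k : ℝ)) (b := 1/2)
    (by norm_num) (lt_of_lt_of_le neg_one_lt_zero (Nat.cast_nonneg k)) (by norm_num)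
  rw [← this]
  refine setIntegral_congr_fun measurableSet_Ioi (fun x hx => ?_)
  rw [Real.rpow_natCast, Real.rpow_two]

lemma J_odd (k : ℕ) (hk : Odd k) : ∫ x : ℝ, x ^ k * rexp (-(1/2) * x ^ 2) = 0 := by
  have h := integral_neg_eq_self (fun x : ℝ => x ^ k * rexp (-(1/2) * x ^ 2)) volume
  have : ∫ x : ℝ, (-x) ^ k * rexp (-(1/2) * (-x) ^ 2) = - ∫ x : ℝ, x ^ k * rexp (-(1/2) * x ^ 2) := by
    rw [← integral_neg]
    congr 1 with x
    rw [hk.neg_pow, neg_sq]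
    ring
  rw [this] at h
  linarith

lemma J_even (k : ℕ) (hk : Even k) : ∫ x : ℝ, x ^ k * rexp (-(1/2) * x ^ 2)
    = 2 * ((1/2 : ℝ) ^ (-((k : ℝ) + 1) / 2) * (1 / 2) * Gamma (((k : ℝ) + 1) / 2)) := by
  set f : ℝ → ℝ := fun x => x ^ k * rexp (-(1/2) * x ^ 2) with hf
  have hint := integrable_pow_exp k
  have h1 : (∫ x in Iic (0:ℝ), f x) + (∫ x in Ioi (0:ℝ), f x) = ∫ x, f x :=
    intervalIntegral.integral_Iic_add_Ioi hint.integrableOn hint.integrableOn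
  have h2 : (∫ x in Iic (0:ℝ), f x) = ∫ x in Ioi (0:ℝ), f x := by
    have := integral_comp_neg_Ioi (0:ℝ) f
    rw [neg_zero] at this
    rw [← this]
    congr 1 with x
    simp only [hf, hk.neg_pow, neg_sq]
  rw [← J_Ioi, ← h1, h2]
  ring

end

noncomputable section

lemma sqrt_two_pi_eq : √(2*π) = √2 * √π := Real.sqrt_mul (by norm_num) π

lemma sqrt_two_pi_ne : √2 * √π ≠ 0 := by positivity

lemma G32 : Gamma ((3:ℝ)/2) = √π / 2 := by
  rw [show (3:ℝ)/2 = 1/2 + 1 by norm_num, Gamma_add_one (by norm_num), Gamma_one_half_eq]; ring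

lemma G52 : Gamma ((5:ℝ)/2) = 3 * √π / 4 := by
  rw [show (5:ℝ)/2 = 3/2 + 1 by norm_num, Gamma_add_one (by norm_num), G32]; ring

lemma half_rpow (y : ℝ) : (1/2:ℝ) ^ y = (2:ℝ) ^ (-y) := by
  rw [one_div, Real.inv_rpow (by norm_num : (0:ℝ) ≤ 2), ← Real.rpow_neg (by norm_num : (0:ℝ) ≤ 2)]

lemma r32 : (1/2:ℝ) ^ (-(3:ℝ)/2) = 2 * √2 := by
  rw [half_rpow, show -(-(3:ℝ)/2) = 1 + 1/2 by norm_num, Real.rpow_add (by norm_num),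
    Real.rpow_one, ← Real.sqrt_eq_rpow]

lemma r52 : (1/2:ℝ) ^ (-(5:ℝ)/2) = 4 * √2 := by
  rw [half_rpow, show -(-(5:ℝ)/2) = 2 + 1/2 by norm_num, Real.rpow_add (by norm_num),
    ← Real.sqrt_eq_rpow, Real.rpow_two]
  norm_num

lemma gauss_moment (k : ℕ) : ∫ x, x ^ k ∂(gaussianReal 0 1)
    = (√(2*π))⁻¹ * ∫ x : ℝ, x ^ k * rexp (-(1/2) * x ^ 2) := by
  rw [integral_gauss_eq]
  have : ∀ x : ℝ, gaussianPDFReal 0 1 x * x ^ k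
      = (√(2*π))⁻¹ * (x ^ k * rexp (-(1/2) * x ^ 2)) := fun x => by
    simp only [gauss_pdf_eq]; ring
  simp only [this]
  rw [integral_const_mul]

lemma E1 : ∫ x, x ∂(gaussianReal 0 1) = 0 := by
  have h := J_odd 1 ⟨0, rfl⟩
  simp only [pow_one] at h
  have := gauss_moment 1
  simp only [pow_one] at this
  rw [this, h, mul_zero]

lemma E3 : ∫ x, x ^ 3 ∂(gaussianReal 0 1) = 0 := by
  rw [gauss_moment 3, J_odd 3 ⟨1, rfl⟩, mul_zero]

lemma E2 : ∫ x, x ^ 2 ∂(gaussianReal 0 1) = 1 := by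
  rw [gauss_moment 2, J_even 2 ⟨1, rfl⟩,
    show -(((2:ℕ):ℝ)+1)/2 = -(3:ℝ)/2 by norm_num,
    show (((2:ℕ):ℝ)+1)/2 = (3:ℝ)/2 by norm_num, r32, G32, sqrt_two_pi_eq]
  have h2 : (√2 : ℝ) ≠ 0 := by positivity
  have hp : (√π : ℝ) ≠ 0 := by positivity
  field_simp

lemma E4 : ∫ x, x ^ 4 ∂(gaussianReal 0 1) = 3 := by
  rw [gauss_moment 4, J_even 4 ⟨2, rfl⟩,
    show -(((4:ℕ):ℝ)+1)/2 = -(5:ℝ)/2 by norm_num,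
    show (((4:ℕ):ℝ)+1)/2 = (5:ℝ)/2 by norm_num, r52, G52, sqrt_two_pi_eq]
  have h2 : (√2 : ℝ) ≠ 0 := by positivity
  have hp : (√π : ℝ) ≠ 0 := by positivity
  field_simp

end


noncomputable section

lemma integral_pi_prod {ι : Type*} [Fintype ι] {A : Type*} [MeasurableSpace A]
    (μ : Measure A) [SigmaFinite μ] (f : ι → A → ℝ) :
    ∫ x : ι → A, ∏ i, f i (x i) ∂(Measure.pi fun _ => μ) = ∏ i, ∫ x, f i x ∂μ := by
  letI : MeasureSpace A := { volume := μ }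
  haveI : SigmaFinite (volume : Measure A) := ‹SigmaFinite μ›
  exact MeasureTheory.integral_fintype_prod_eq_prod f

lemma integrable_pi_prod {ι : Type*} [Fintype ι] {A : Type*} [MeasurableSpace A]
    (μ : Measure A) [SigmaFinite μ] (f : ι → A → ℝ) (hf : ∀ i, Integrable (f i) μ) :
    Integrable (fun x : ι → A => ∏ i, f i (x i)) (Measure.pi fun _ => μ) := by
  letI : MeasureSpace A := { volume := μ }
  haveI : SigmaFinite (volume : Measure A) := ‹SigmaFinite μ›
  exact MeasureTheory.Integrable.fintype_prod hf

end

noncomputable section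

variable {n : ℕ}

local notation "μ₀" => gaussianReal 0 1

abbrev nug (n : ℕ) : Measure (Fin n → ℝ) := Measure.pi fun _ : Fin n => μ₀

/-- component factors for `y a * y b` -/
def gg (a b j : Fin n) : ℝ → ℝ := fun t => (if j = a then t else 1) * (if j = b then t else 1)

lemma gg_prod (a b : Fin n) (y : Fin n → ℝ) : ∏ j, gg a b j (y j) = y a * y b := by
  unfold gg
  rw [Finset.prod_mul_distrib, Finset.prod_ite_eq', Finset.prod_ite_eq']
  simp

lemma gg_int (a b j : Fin n) : Integrable (gg a b j) μ₀ := by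
  unfold gg
  rcases eq_or_ne j a with h1 | h1 <;> rcases eq_or_ne j b with h2 | h2
  · subst h1; subst h2
    simp only [if_pos rfl]
    simpa [pow_two] using integrable_pow_gauss 2
  · subst h1
    simp only [if_pos rfl, if_neg h2, mul_one]
    simpa using integrable_pow_gauss 1
  · subst h2
    simp only [if_pos rfl, if_neg h1, one_mul]
    simpa using integrable_pow_gauss 1
  · simp only [if_neg h1, if_neg h2, mul_one]
    exact integrable_const 1

lemma gg_integral (a b j : Fin n) : ∫ t, gg a b j t ∂μ₀
    = if j = a then (if j = b then 1 else 0) else (if j = b then 0 else 1) := by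
  unfold gg
  rcases eq_or_ne j a with h1 | h1 <;> rcases eq_or_ne j b with h2 | h2
  · subst h1; subst h2; simpa [pow_two] using E2
  · subst h1; simpa [h2] using E1
  · subst h2; simpa [h1] using E1
  · simp [h1, h2]

lemma integrable_gg (a b : Fin n) : Integrable (fun y : Fin n → ℝ => y a * y b) (nug n) := by
  have := integrable_pi_prod μ₀ (gg a b) (gg_int a b)
  refine this.congr (Filter.Eventually.of_forall fun y => ?_)
  exact gg_prod a b y

lemma integral_gg (a b : Fin n) :
    ∫ y, y a * y b ∂(nug n) = if a = b then 1 else 0 := by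
  have h : (fun y : Fin n → ℝ => y a * y b) = fun y => ∏ j, gg a b j (y j) := by
    funext y; rw [gg_prod]
  rw [h, integral_pi_prod μ₀ (gg a b)]
  simp only [gg_integral]
  by_cases hab : a = b
  · subst hab
    have hv : ∀ x : Fin n,
        (if x = a then (if x = a then (1:ℝ) else 0) else if x = a then 0 else 1) = 1 :=
      fun x => by by_cases h : x = a <;> simp [h]
    rw [if_pos rfl]
    simp [hv]
  · rw [if_neg hab]
    exact Finset.prod_eq_zero (Finset.mem_univ a) (by simp [hab])

/-- component factors for `y i ^ 2 * y a * y b` -/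
def ggg (i a b j : Fin n) : ℝ → ℝ := fun t =>
  (if j = i then t ^ 2 else 1) * (if j = a then t else 1) * (if j = b then t else 1)

lemma ggg_prod (i a b : Fin n) (y : Fin n → ℝ) :
    ∏ j, ggg i a b j (y j) = y i ^ 2 * y a * y b := by
  unfold ggg
  rw [Finset.prod_mul_distrib, Finset.prod_mul_distrib, Finset.prod_ite_eq',
    Finset.prod_ite_eq', Finset.prod_ite_eq']
  simp

lemma ggg_int (i a b j : Fin n) : Integrable (ggg i a b j) μ₀ := by
  unfold ggg
  rcases eq_or_ne j i with h1 | h1 <;> rcases eq_or_ne j a with h2 | h2 <;>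
    rcases eq_or_ne j b with h3 | h3
  · subst h1; subst h2; subst h3
    simp only [if_pos rfl]
    simpa [show ∀ t : ℝ, t ^ 4 = t ^ 2 * t * t from fun t => by ring]
      using integrable_pow_gauss 4
  · subst h1; subst h2
    simp only [if_pos rfl, if_neg h3, mul_one]
    simpa [show ∀ t : ℝ, t ^ 3 = t ^ 2 * t from fun t => by ring]
      using integrable_pow_gauss 3
  · subst h1; subst h3
    simp only [if_pos rfl, if_neg h2, mul_one]
    simpa [show ∀ t : ℝ, t ^ 3 = t ^ 2 * 1 * t from fun t => by ring]
      using integrable_pow_gauss 3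
  · subst h1
    simp only [if_pos rfl, if_neg h2, if_neg h3, mul_one]
    simpa using integrable_pow_gauss 2
  · subst h2; subst h3
    simp only [if_pos rfl, if_neg h1, one_mul]
    simpa [pow_two] using integrable_pow_gauss 2
  · subst h2
    simp only [if_pos rfl, if_neg h1, if_neg h3, one_mul, mul_one]
    simpa using integrable_pow_gauss 1
  · subst h3
    simp only [if_pos rfl, if_neg h1, if_neg h2, one_mul]
    simpa using integrable_pow_gauss 1
  · simp only [if_neg h1, if_neg h2, if_neg h3, mul_one]
    exact integrable_const 1

lemma ggg_integral (i a b j : Fin n) : ∫ t, ggg i a b j t ∂μ₀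
    = if j = i then (if j = a then (if j = b then 3 else 0) else (if j = b then 0 else 1))
      else (if j = a then (if j = b then 1 else 0) else (if j = b then 0 else 1)) := by
  unfold ggg
  rcases eq_or_ne j i with h1 | h1 <;> rcases eq_or_ne j a with h2 | h2 <;>
    rcases eq_or_ne j b with h3 | h3
  · subst h1; subst h2; subst h3
    simpa [show ∀ t : ℝ, t ^ 4 = t ^ 2 * t * t from fun t => by ring] using E4
  · subst h1; subst h2
    simpa [h3, show ∀ t : ℝ, t ^ 3 = t ^ 2 * t from fun t => by ring] using E3
  · subst h1; subst h3
    simpa [h2, show ∀ t : ℝ, t ^ 3 = t ^ 2 * 1 * t from fun t => by ring] using E3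
  · subst h1
    simpa [h2, h3] using E2
  · subst h2; subst h3
    simpa [h1, pow_two] using E2
  · subst h2
    simpa [h1, h3] using E1
  · subst h3
    simpa [h1, h2] using E1
  · simp [h1, h2, h3]

lemma integrable_ggg (i a b : Fin n) :
    Integrable (fun y : Fin n → ℝ => y i ^ 2 * y a * y b) (nug n) := by
  have := integrable_pi_prod μ₀ (ggg i a b) (ggg_int i a b)
  refine this.congr (Filter.Eventually.of_forall fun y => ?_)
  exact ggg_prod i a b y

lemma integral_ggg (i a b : Fin n) :
    ∫ y, y i ^ 2 * y a * y b ∂(nug n)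
      = if a = i ∧ b = i then 3 else if a = b then 1 else 0 := by
  have h : (fun y : Fin n → ℝ => y i ^ 2 * y a * y b) = fun y => ∏ j, ggg i a b j (y j) := by
    funext y; rw [ggg_prod]
  rw [h, integral_pi_prod μ₀ (ggg i a b)]
  simp only [ggg_integral]
  rcases eq_or_ne a i with ha | ha <;> rcases eq_or_ne b i with hb | hb
  · rw [if_pos ⟨ha, hb⟩]
    have hv : ∀ x : Fin n,
        (if x = i then (if x = a then (if x = b then (3:ℝ) else 0) else (if x = b then 0 else 1))
          else (if x = a then (if x = b then 1 else 0) else (if x = b then 0 else 1))) =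
        if x = i then 3 else 1 := by
      intro x
      rcases eq_or_ne x i with h1 | h1
      · have h2 : x = a := h1.trans ha.symm
        have h3 : x = b := h1.trans hb.symm
        simp [h1, h2, h3, ha.symm, hb.symm, ha.trans hb.symm]
      · have h2 : x ≠ a := fun hx => h1 (hx.trans ha)
        have h3 : x ≠ b := fun hx => h1 (hx.trans hb)
        simp [h1, h2, h3]
    simp only [hv, Finset.prod_ite_eq']
    simp
  · rw [if_neg (fun hc => hb hc.2), if_neg (fun hc : a = b => hb (hc.symm.trans ha))]
    refine Finset.prod_eq_zero (Finset.mem_univ b) ?_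
    have h1 : b ≠ i := hb
    have h2 : b ≠ a := fun hx => hb (hx.trans ha)
    simp [h1, h2]
  · rw [if_neg (fun hc => ha hc.1), if_neg (fun hc : a = b => ha (hc.trans hb))]
    refine Finset.prod_eq_zero (Finset.mem_univ a) ?_
    have h1 : a ≠ i := ha
    have h2 : a ≠ b := fun hx => ha (hx.trans hb)
    simp [h1, h2]
  · by_cases hab : a = b
    · rw [if_neg (fun hc => ha hc.1), if_pos hab]
      have hv : ∀ x : Fin n,
          (if x = i then (if x = a then (if x = b then (3:ℝ) else 0) else (if x = b then 0 else 1))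
            else (if x = a then (if x = b then 1 else 0) else (if x = b then 0 else 1))) = 1 := by
        intro x
        rcases eq_or_ne x i with h1 | h1
        · have h2 : x ≠ a := fun hx => ha (hx.symm.trans h1)
          have h3 : x ≠ b := fun hx => hb (hx.symm.trans h1)
          simp [h1, h2, h3, Ne.symm ha, Ne.symm hb]
        · rcases eq_or_ne x a with h2 | h2
          · have h3 : x = b := h2.trans hab
            simp [h1, h2, h3, ha, hab, hb]
          · have h3 : x ≠ b := fun hx => h2 (hx.trans hab.symm)
            simp [h1, h2, h3]
      simp [hv]
    · rw [if_neg (fun hc => ha hc.1), if_neg hab]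
      refine Finset.prod_eq_zero (Finset.mem_univ a) ?_
      simp [ha, hab]

end

noncomputable section

variable {n : ℕ}

/-- centered single-sample estimator -/
def ff (B : Matrix (Fin n) (Fin n) ℝ) (i : Fin n) : (Fin n → ℝ) → ℝ :=
  fun y => y i * B.mulVec y i - B i i

lemma ff_eq (B : Matrix (Fin n) (Fin n) ℝ) (i : Fin n) (y : Fin n → ℝ) :
    ff B i y = (∑ j, B i j * (y i * y j)) - B i i := by
  unfold ff
  congr 1
  simp only [Matrix.mulVec, dotProduct, Finset.mul_sum]
  exact Finset.sum_congr rfl fun j _ => by ring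

lemma integrable_S (B : Matrix (Fin n) (Fin n) ℝ) (i : Fin n) :
    Integrable (fun y : Fin n → ℝ => ∑ j, B i j * (y i * y j)) (nug n) :=
  integrable_finset_sum _ fun j _ => (integrable_gg i j).const_mul _

lemma integral_S (B : Matrix (Fin n) (Fin n) ℝ) (i : Fin n) :
    ∫ y, ∑ j, B i j * (y i * y j) ∂(nug n) = B i i := by
  rw [integral_finset_sum _ fun j _ => (integrable_gg i j).const_mul _]
  simp only [integral_const_mul, integral_gg]
  simp [Finset.sum_ite_eq]

lemma integrable_ff (B : Matrix (Fin n) (Fin n) ℝ) (i : Fin n) :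
    Integrable (ff B i) (nug n) := by
  have h : ff B i = fun y => (∑ j, B i j * (y i * y j)) - B i i := funext (ff_eq B i)
  rw [h]
  exact (integrable_S B i).sub (integrable_const _)

lemma integral_ff (B : Matrix (Fin n) (Fin n) ℝ) (i : Fin n) :
    ∫ y, ff B i y ∂(nug n) = 0 := by
  have h : ff B i = fun y => (∑ j, B i j * (y i * y j)) - B i i := funext (ff_eq B i)
  rw [h, integral_sub (integrable_S B i) (integrable_const _), integral_S, integral_const]
  simp

lemma ff_sq_eq (B : Matrix (Fin n) (Fin n) ℝ) (i : Fin n) (y : Fin n → ℝ) :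
    ff B i y ^ 2 = (∑ j, ∑ p, B i j * B i p * (y i ^ 2 * y j * y p))
      - 2 * B i i * (∑ j, B i j * (y i * y j)) + B i i ^ 2 := by
  rw [ff_eq]
  have hS : (∑ j, B i j * (y i * y j)) ^ 2
      = ∑ j, ∑ p, B i j * B i p * (y i ^ 2 * y j * y p) := by
    rw [sq, Finset.sum_mul_sum]
    exact Finset.sum_congr rfl fun j _ => Finset.sum_congr rfl fun p _ => by ring
  have hexp : ((∑ j, B i j * (y i * y j)) - B i i) ^ 2
      = (∑ j, B i j * (y i * y j)) ^ 2 - 2 * B i i * (∑ j, B i j * (y i * y j)) + B i i ^ 2 := by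
    ring
  rw [hexp, hS]

lemma integrable_ff_sq (B : Matrix (Fin n) (Fin n) ℝ) (i : Fin n) :
    Integrable (fun y => ff B i y ^ 2) (nug n) := by
  have h : (fun y => ff B i y ^ 2) = fun y => (∑ j, ∑ p, B i j * B i p * (y i ^ 2 * y j * y p))
      - 2 * B i i * (∑ j, B i j * (y i * y j)) + B i i ^ 2 := funext (ff_sq_eq B i)
  rw [h]
  refine Integrable.add (Integrable.sub ?_ ((integrable_S B i).const_mul _)) (integrable_const _)
  exact integrable_finset_sum _ fun j _ =>
    integrable_finset_sum _ fun p _ => (integrable_ggg i j p).const_mul _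

lemma integral_ff_sq (B : Matrix (Fin n) (Fin n) ℝ) (i : Fin n) :
    ∫ y, ff B i y ^ 2 ∂(nug n) = B i i ^ 2 + ∑ j, B i j ^ 2 := by
  have h : (fun y => ff B i y ^ 2) = fun y => (∑ j, ∑ p, B i j * B i p * (y i ^ 2 * y j * y p))
      - 2 * B i i * (∑ j, B i j * (y i * y j)) + B i i ^ 2 := funext (ff_sq_eq B i)
  have hint1 : Integrable (fun y : Fin n → ℝ =>
      ∑ j, ∑ p, B i j * B i p * (y i ^ 2 * y j * y p)) (nug n) :=
    integrable_finset_sum _ fun j _ =>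
      integrable_finset_sum _ fun p _ => (integrable_ggg i j p).const_mul _
  have hcm : Integrable (fun y : Fin n → ℝ => 2 * B i i * ∑ j, B i j * (y i * y j)) (nug n) :=
    (integrable_S B i).const_mul _
  have hsub : Integrable (fun y : Fin n → ℝ =>
      (∑ j, ∑ p, B i j * B i p * (y i ^ 2 * y j * y p))
        - 2 * B i i * ∑ j, B i j * (y i * y j)) (nug n) := hint1.sub hcm
  rw [h, integral_add hsub (integrable_const _),
    integral_sub hint1 hcm,
    integral_finset_sum _ (fun j _ =>
      integrable_finset_sum _ fun p _ => (integrable_ggg i j p).const_mul _),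
    integral_const_mul, integral_S, integral_const]
  have hkey : ∑ j, ∫ y, ∑ p, B i j * B i p * (y i ^ 2 * y j * y p) ∂(nug n)
      = 2 * B i i ^ 2 + ∑ j, B i j ^ 2 := by
    have hin : ∀ j, ∫ y, ∑ p, B i j * B i p * (y i ^ 2 * y j * y p) ∂(nug n)
        = if j = i then 3 * B i i ^ 2 else B i j ^ 2 := by
      intro j
      rw [integral_finset_sum _ fun p _ => (integrable_ggg i j p).const_mul _]
      simp only [integral_const_mul, integral_ggg]
      rcases eq_or_ne j i with hj | hj
      · have hterm : ∀ p : Fin n, B i j * B i p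
            * (if j = i ∧ p = i then (3:ℝ) else if j = p then 1 else 0)
            = if p = i then 3 * B i i ^ 2 else 0 := by
          intro p
          rcases eq_or_ne p i with hp | hp
          · rw [if_pos ⟨hj, hp⟩, if_pos hp, hj, hp]
            ring
          · rw [if_neg (fun hc => hp hc.2), if_neg (fun hc : j = p => hp (hc.symm.trans hj)),
              if_neg hp, mul_zero]
        simp only [hterm, Finset.sum_ite_eq']
        simp [hj]
      · have hterm : ∀ p : Fin n, B i j * B i p
            * (if j = i ∧ p = i then (3:ℝ) else if j = p then 1 else 0)
            = if p = j then B i j ^ 2 else 0 := by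
          intro p
          rcases eq_or_ne p j with hp | hp
          · rw [if_neg (fun hc => hj hc.1), if_pos hp.symm, if_pos hp, hp]
            ring
          · rw [if_neg (fun hc => hj hc.1), if_neg (fun hc : j = p => hp hc.symm),
              if_neg hp, mul_zero]
        simp only [hterm, Finset.sum_ite_eq']
        simp [hj]
    simp only [hin]
    have hsplit : ∀ j : Fin n, (if j = i then 3 * B i i ^ 2 else B i j ^ 2)
        = B i j ^ 2 + (if j = i then 2 * B i i ^ 2 else 0) := by
      intro j
      rcases eq_or_ne j i with hj | hj
      · rw [if_pos hj, if_pos hj, hj]; ring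
      · rw [if_neg hj, if_neg hj, add_zero]
    simp only [hsplit, Finset.sum_add_distrib, Finset.sum_ite_eq']
    simp [add_comm]
  rw [hkey]
  simp
  ring

end

noncomputable section

variable {n m : ℕ}

/-- coordinate factors for `ff(x k) * ff(x l)` over the `m`-fold product -/
def HH (B : Matrix (Fin n) (Fin n) ℝ) (i : Fin n) (k l k' : Fin m) : (Fin n → ℝ) → ℝ :=
  fun z => (if k' = k then ff B i z else 1) * (if k' = l then ff B i z else 1)

lemma HH_prod (B : Matrix (Fin n) (Fin n) ℝ) (i : Fin n) (k l : Fin m)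
    (x : Fin m → Fin n → ℝ) : ∏ k', HH B i k l k' (x k') = ff B i (x k) * ff B i (x l) := by
  unfold HH
  rw [Finset.prod_mul_distrib, Finset.prod_ite_eq', Finset.prod_ite_eq']
  simp

lemma HH_int (B : Matrix (Fin n) (Fin n) ℝ) (i : Fin n) (k l k' : Fin m) :
    Integrable (HH B i k l k') (nug n) := by
  unfold HH
  rcases eq_or_ne k' k with h1 | h1 <;> rcases eq_or_ne k' l with h2 | h2
  · subst h1; subst h2
    simp only [if_pos rfl]
    simpa [pow_two] using integrable_ff_sq B i
  · subst h1
    simp only [if_pos rfl, if_neg h2, mul_one]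
    exact integrable_ff B i
  · subst h2
    simp only [if_pos rfl, if_neg h1, one_mul]
    exact integrable_ff B i
  · simp only [if_neg h1, if_neg h2, mul_one]
    exact integrable_const 1

lemma HH_integral (B : Matrix (Fin n) (Fin n) ℝ) (i : Fin n) (k l k' : Fin m) :
    ∫ z, HH B i k l k' z ∂(nug n)
      = if k' = k then (if k' = l then B i i ^ 2 + ∑ j, B i j ^ 2 else 0)
        else (if k' = l then 0 else 1) := by
  unfold HH
  rcases eq_or_ne k' k with h1 | h1 <;> rcases eq_or_ne k' l with h2 | h2
  · subst h1; subst h2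
    simpa [pow_two] using integral_ff_sq B i
  · subst h1
    simpa [h2] using integral_ff B i
  · subst h2
    simpa [h1] using integral_ff B i
  · simp [h1, h2]

lemma integrable_HH (B : Matrix (Fin n) (Fin n) ℝ) (i : Fin n) (k l : Fin m) :
    Integrable (fun x : Fin m → Fin n → ℝ => ff B i (x k) * ff B i (x l))
      (Measure.pi fun _ : Fin m => nug n) := by
  have := integrable_pi_prod (nug n) (HH B i k l) (HH_int B i k l)
  refine this.congr (Filter.Eventually.of_forall fun x => ?_)
  exact HH_prod B i k l x

lemma integral_HH (B : Matrix (Fin n) (Fin n) ℝ) (i : Fin n) (k l : Fin m) :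
    ∫ x, ff B i (x k) * ff B i (x l) ∂(Measure.pi fun _ : Fin m => nug n)
      = if k = l then B i i ^ 2 + ∑ j, B i j ^ 2 else 0 := by
  have h : (fun x : Fin m → Fin n → ℝ => ff B i (x k) * ff B i (x l))
      = fun x => ∏ k', HH B i k l k' (x k') := by
    funext x; rw [HH_prod]
  rw [h, integral_pi_prod (nug n) (HH B i k l)]
  simp only [HH_integral]
  by_cases hkl : k = l
  · rw [if_pos hkl]
    have hv : ∀ x : Fin m,
        (if x = k then (if x = l then B i i ^ 2 + ∑ j, B i j ^ 2 else 0)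
          else (if x = l then 0 else 1))
        = if x = k then B i i ^ 2 + ∑ j, B i j ^ 2 else 1 := by
      intro x
      rcases eq_or_ne x k with h1 | h1
      · have h2 : x = l := h1.trans hkl
        simp [h1, h2, hkl]
      · have h2 : ¬ x = l := fun hx => h1 (hx.trans hkl.symm)
        simp [h1, h2]
    simp only [hv, Finset.prod_ite_eq']
    simp
  · rw [if_neg hkl]
    refine Finset.prod_eq_zero (Finset.mem_univ k) ?_
    simp [hkl]

/-- For the generalized stochastic diagonal estimator
`EST^m := (1/m) Σ_k ω^{(k)} ⊙ (B ω^{(k)})` built from `m` i.i.d. standard Gaussian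
query vectors, `E[((EST^m − diag B)_i)²] = (1/m)(B_{ii}² + ‖[B]_{i,:}‖₂²)`. -/
theorem stmt_1 (n m : ℕ) (hm : 1 ≤ m) (B : Matrix (Fin n) (Fin n) ℝ) (i : Fin n)
    (P : Measure (Fin m → Fin n → ℝ))
    (hP : P = Measure.pi fun _ : Fin m => Measure.pi fun _ : Fin n => gaussianReal 0 1) :
    (∫ x, ((1 / (m : ℝ)) * (∑ k, x k i * B.mulVec (x k) i) - B i i) ^ 2 ∂P)
      = (1 / (m : ℝ)) * (B i i ^ 2 + ∑ j, B i j ^ 2) := by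
  subst hP
  have hm' : (m : ℝ) ≠ 0 := Nat.cast_ne_zero.mpr (Nat.one_le_iff_ne_zero.mp hm)
  have hpt : ∀ x : Fin m → Fin n → ℝ,
      ((1 / (m : ℝ)) * (∑ k, x k i * B.mulVec (x k) i) - B i i) ^ 2
        = (1 / (m : ℝ)) ^ 2 * ∑ k, ∑ l, ff B i (x k) * ff B i (x l) := by
    intro x
    have hterm : ∀ k : Fin m, x k i * B.mulVec (x k) i = ff B i (x k) + B i i := by
      intro k; simp [ff]
    have hsum : ∑ k, x k i * B.mulVec (x k) i = (∑ k, ff B i (x k)) + m * B i i := by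
      rw [Finset.sum_congr rfl fun k _ => hterm k, Finset.sum_add_distrib, Finset.sum_const,
        Finset.card_univ, Fintype.card_fin, nsmul_eq_mul]
    rw [hsum]
    have h1 : (1 / (m : ℝ)) * ((∑ k, ff B i (x k)) + m * B i i) - B i i
        = (1 / (m : ℝ)) * ∑ k, ff B i (x k) := by
      field_simp
      ring
    rw [h1, mul_pow]
    congr 1
    rw [sq, Finset.sum_mul_sum]
  simp only [hpt]
  rw [integral_const_mul,
    integral_finset_sum _ (fun k _ => integrable_finset_sum _ fun l _ => integrable_HH B i k l)]
  have : ∀ k : Fin m, ∫ x, ∑ l, ff B i (x k) * ff B i (x l)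
      ∂(Measure.pi fun _ : Fin m => nug n) = B i i ^ 2 + ∑ j, B i j ^ 2 := by
    intro k
    rw [integral_finset_sum _ fun l _ => integrable_HH B i k l]
    simp only [integral_HH]
    simp
  simp only [this, Finset.sum_const, Finset.card_univ, Fintype.card_fin, nsmul_eq_mul]
  field_simp

end
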